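/- Let ν₁, ν₂, ν₃, ν₄, t₁, t₂, t₃ be real numbers with 4t₂ + ν₂t₃ ≠ 0. Define p₁₂(t₄) = 16ν₄t₁t₂t₃ + 4ν₃ν₄t₁t₂t₄ + ν₂ν₃ν₄t₁t₃t₄ + 64t₂t₃t₄ − 4ν₂ν₄t₁ − 16ν₃t₂ − 4ν₂ν₃t₃ − 16ν₂t₄ and p₁₃(t₄) = ν₁ν₂ν₄t₁t₂t₃ + 64t₁t₂t₄ + 16ν₂t₁t₃t₄ + 4ν₁ν₂t₂t₃t₄ − 4ν₁ν₄t₁ − 16ν₄t₂ − 4ν₂ν₄t₃ − 16ν₁t₄. If there exists a real number t₄ with p₁₂(t₄) = 0 and p₁₃(t₄) = 0, then ν₄(ν₁ν₂ν₃ν₄ − 256)·t₁²t₂t₃ + 4ν₄(16ν₂ − ν₁ν₃ν₄)·t₁² + 16ν₃(16 − ν₄²)·t₁t₂ + 4ν₂ν₃(16 − ν₄²)·t₁t₃ + 16(ν₁ν₂ν₃ − 16ν₄)·t₂t₃ + 64(ν₂ν₄ − ν₁ν₃) = 0. -/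
import Mathlib

/-- Elimination step: in the generic case `4t₂ + ν₂t₃ ≠ 0`, a common real root `t₄`
of the minors `p₁₂` and `p₁₃` forces the vanishing of the resultant-type polynomial. -/
theorem stmt_15 (ν₁ ν₂ ν₃ ν₄ t₁ t₂ t₃ : ℝ) (hgen : 4 * t₂ + ν₂ * t₃ ≠ 0)
    (p₁₂ p₁₃ : ℝ → ℝ)
    (hp₁₂ : ∀ t₄, p₁₂ t₄ = 16 * ν₄ * t₁ * t₂ * t₃ + 4 * ν₃ * ν₄ * t₁ * t₂ * t₄ +
      ν₂ * ν₃ * ν₄ * t₁ * t₃ * t₄ + 64 * t₂ * t₃ * t₄ - 4 * ν₂ * ν₄ * t₁ -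
      16 * ν₃ * t₂ - 4 * ν₂ * ν₃ * t₃ - 16 * ν₂ * t₄)
    (hp₁₃ : ∀ t₄, p₁₃ t₄ = ν₁ * ν₂ * ν₄ * t₁ * t₂ * t₃ + 64 * t₁ * t₂ * t₄ +
      16 * ν₂ * t₁ * t₃ * t₄ + 4 * ν₁ * ν₂ * t₂ * t₃ * t₄ - 4 * ν₁ * ν₄ * t₁ -
      16 * ν₄ * t₂ - 4 * ν₂ * ν₄ * t₃ - 16 * ν₁ * t₄)
    (hroot : ∃ t₄ : ℝ, p₁₂ t₄ = 0 ∧ p₁₃ t₄ = 0) :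
    ν₄ * (ν₁ * ν₂ * ν₃ * ν₄ - 256) * t₁ ^ 2 * t₂ * t₃ +
      4 * ν₄ * (16 * ν₂ - ν₁ * ν₃ * ν₄) * t₁ ^ 2 +
      16 * ν₃ * (16 - ν₄ ^ 2) * t₁ * t₂ +
      4 * ν₂ * ν₃ * (16 - ν₄ ^ 2) * t₁ * t₃ +
      16 * (ν₁ * ν₂ * ν₃ - 16 * ν₄) * t₂ * t₃ +
      64 * (ν₂ * ν₄ - ν₁ * ν₃) = 0 := by
  obtain ⟨t₄, h12, h13⟩ := hroot
  rw [hp₁₂ t₄] at h12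
  rw [hp₁₃ t₄] at h13
  have key : (4 * t₂ + ν₂ * t₃) *
      (ν₄ * (ν₁ * ν₂ * ν₃ * ν₄ - 256) * t₁ ^ 2 * t₂ * t₃ +
        4 * ν₄ * (16 * ν₂ - ν₁ * ν₃ * ν₄) * t₁ ^ 2 +
        16 * ν₃ * (16 - ν₄ ^ 2) * t₁ * t₂ +
        4 * ν₂ * ν₃ * (16 - ν₄ ^ 2) * t₁ * t₃ +
        16 * (ν₁ * ν₂ * ν₃ - 16 * ν₄) * t₂ * t₃ +
        64 * (ν₂ * ν₄ - ν₁ * ν₃)) = 0 := by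
    linear_combination
      (4 * ν₃ * ν₄ * t₁ * t₂ + ν₂ * ν₃ * ν₄ * t₁ * t₃ + 64 * t₂ * t₃ - 16 * ν₂) * h13 -
      (64 * t₁ * t₂ + 16 * ν₂ * t₁ * t₃ + 4 * ν₁ * ν₂ * t₂ * t₃ - 16 * ν₁) * h12
  exact (mul_eq_zero.mp key).resolve_left hgen
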